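/- Over a field F of characteristic not 2, the 2n×2n matrix -Ω_nP_n, where P_n is the symmetric matrix whose top-left n×n block is the anti-identity (ones on the anti-diagonal) and whose bottom-right n×n block has ones in positions (k, n+1-k) for k ≤ n-1 arranged as the shifted anti-diagonal with a zero corner (equivalently, -(-Ω_nP_n)² = J_n(0)ᵀ ⊕ J_n(0)), is nilpotent of rank 2n-1, hence similar to the single Jordan block J_{2n}(0). -/

import Mathlib

open Matrix

/-- The standard symplectic matrix `Ω_n = [[0, I_n], [-I_n, 0]]`. -/
def Omega (F : Type*) [Field F] (n : ℕ) :
    Matrix (Fin n ⊕ Fin n) (Fin n ⊕ Fin n) F :=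
  Matrix.fromBlocks 0 1 (-1) 0

/-- The symmetric block-diagonal matrix `P_n`: top-left block is the
anti-identity, bottom-right block is the shifted anti-diagonal with a zero
corner, chosen so that `-(-Ω_n P_n)² = J_n(0)ᵀ ⊕ J_n(0)`. -/
def Pmat (F : Type*) [Field F] (n : ℕ) :
    Matrix (Fin n ⊕ Fin n) (Fin n ⊕ Fin n) F :=
  Matrix.fromBlocks
    (Matrix.of fun i j => if (i : ℕ) + (j : ℕ) + 1 = n then 1 else 0) 0 0
    (Matrix.of fun i j => if (i : ℕ) + (j : ℕ) = n then 1 else 0)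

namespace Aux14

variable (F : Type*) [Field F]

/-- The nilpotent Jordan block with superdiagonal ones. -/
def Jb (m : ℕ) : Matrix (Fin m) (Fin m) F :=
  Matrix.of fun i j => if (i : ℕ) + 1 = (j : ℕ) then 1 else 0

/-- Explicit form of the reindexed matrix `-Ω_n P_n`. -/
def Mexp (n : ℕ) : Matrix (Fin (n+n)) (Fin (n+n)) F :=
  Matrix.of fun p q =>
    if (p:ℕ) < n ∧ (p:ℕ)+(q:ℕ) = 2*n then -1
    else if n ≤ (p:ℕ) ∧ (p:ℕ)+(q:ℕ)+1 = 2*n then 1 else 0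

def posF (n : ℕ) (j : Fin (n+n)) : Fin (n+n) :=
  if (j:ℕ) % 2 = 0 then ⟨n + (j:ℕ)/2, by have := j.2; omega⟩
  else ⟨n - 1 - (j:ℕ)/2, by have := j.2; omega⟩

def posI (n : ℕ) (p : Fin (n+n)) : Fin (n+n) :=
  if (p:ℕ) < n then ⟨2*(n-1-(p:ℕ))+1, by have := p.2; omega⟩
  else ⟨2*((p:ℕ)-n), by have := p.2; omega⟩

lemma posI_posF (n : ℕ) (j : Fin (n+n)) : posI n (posF n j) = j := by
  have hj := j.2
  by_cases h : (j:ℕ) % 2 = 0 <;>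
    · simp only [posF, posI, h, if_true, if_false, reduceIte]
      apply Fin.ext
      split_ifs <;> simp <;> omega

lemma posF_posI (n : ℕ) (p : Fin (n+n)) : posF n (posI n p) = p := by
  have hp := p.2
  by_cases h : (p:ℕ) < n <;>
    · simp only [posF, posI, h, if_true, if_false, reduceIte]
      apply Fin.ext
      split_ifs <;> simp <;> omega

lemma posF_val (n : ℕ) (j : Fin (n+n)) :
    ((posF n j):ℕ) = if (j:ℕ)%2 = 0 then n + (j:ℕ)/2 else n - 1 - (j:ℕ)/2 := by
  unfold posF; split_ifs <;> rfl

def eps (n : ℕ) (j : Fin (n+n)) : F := (-1)^(n - 1 - (j:ℕ)/2)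

lemma eps_sq (n : ℕ) (j : Fin (n+n)) : eps F n j * eps F n j = 1 := by
  rw [eps, ← pow_add, ← two_mul, pow_mul]
  simp

/-- The change-of-basis (signed permutation) matrix. -/
def Smat (n : ℕ) : Matrix (Fin (n+n)) (Fin (n+n)) F :=
  Matrix.of fun p j => if p = posF n j then eps F n j else 0

lemma S_mul_transpose (n : ℕ) : Smat F n * (Smat F n)ᵀ = 1 := by
  ext p q
  rw [mul_apply]
  rw [Fintype.sum_eq_single (posI n p) (fun j hj => ?_)]
  · simp only [Smat, transpose_apply, of_apply, posF_posI]
    by_cases hpq : q = p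
    · simp [hpq, eps_sq, Matrix.one_apply]
    · simp [hpq, Matrix.one_apply, Ne.symm hpq]
  · simp only [Smat, transpose_apply, of_apply]
    have : p ≠ posF n j := by
      intro h
      exact hj (by rw [h, posI_posF])
    simp [this]

lemma reindex_N (n : ℕ) :
    Matrix.reindex finSumFinEquiv finSumFinEquiv (-(Omega F n * Pmat F n)) = Mexp F n := by
  rw [Equiv.apply_eq_iff_eq_symm_apply]
  simp only [Matrix.reindex_symm, Matrix.reindex_apply, Equiv.symm_symm]
  ext i j
  simp only [Matrix.submatrix_apply, Omega, Pmat, Matrix.neg_mul, Matrix.fromBlocks_multiply,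
    Matrix.neg_apply, Mexp]
  rcases i with i | i <;> rcases j with j | j <;>
    (have hi := i.2; have hj := j.2;
     simp [Matrix.fromBlocks, Matrix.mul_apply, Fin.ext_iff]) <;>
    (try split_ifs) <;> first
      | rfl
      | exact neg_zero
      | omega

lemma MS_eq_SJ (n : ℕ) : Mexp F n * Smat F n = Smat F n * Jb F (n+n) := by
  ext p j
  have hp := p.2
  have hj := j.2
  rw [mul_apply, Fintype.sum_eq_single (posF n j) (fun q hq => by
    simp only [Smat, of_apply, if_neg hq, mul_zero])]
  rw [mul_apply]
  simp only [Smat, of_apply, if_pos rfl]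
  by_cases hj0 : (j:ℕ) = 0
  · rw [Finset.sum_eq_zero (fun k _ => by simp [Jb, hj0])]
    have hLHS : Mexp F n p (posF n j) = 0 := by
      have hq : ((posF n j):ℕ) = n := by rw [posF_val]; simp [hj0]
      simp only [Mexp, of_apply, hq]
      rw [if_neg (by omega), if_neg (by omega)]
    rw [hLHS, zero_mul]
  · rw [Fintype.sum_eq_single (⟨(j:ℕ)-1, by omega⟩ : Fin (n+n)) (fun k hk => by
      have hne : ¬((k:ℕ)+1 = (j:ℕ)) := by
        intro h
        exact hk (Fin.ext (by simp only [Fin.val_mk]; omega))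
      simp [Jb, hne])]
    simp only [Jb, Mexp, of_apply, eps, Fin.ext_iff, posF_val, Fin.val_mk]
    have h1 : ((j:ℕ) - 1) % 2 = if (j:ℕ) % 2 = 0 then 1 else 0 := by
      split_ifs <;> omega
    split_ifs <;>
      first
        | rfl
        | ring1
        | (exfalso; omega)
        | (rw [show n - 1 - ((j:ℕ)-1)/2 = (n - 1 - (j:ℕ)/2) + 1 by omega, pow_succ]; ring1)
        | (rw [show n - 1 - ((j:ℕ)-1)/2 = n - 1 - (j:ℕ)/2 by omega]; ring1)

lemma Jb_pow (m : ℕ) (k : ℕ) :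
    (Jb F m)^k = Matrix.of fun (i j : Fin m) => if (i:ℕ) + k = (j:ℕ) then (1:F) else 0 := by
  induction k with
  | zero =>
    ext i j
    simp [Matrix.one_apply, Fin.ext_iff]
  | succ k ih =>
    rw [pow_succ, ih]
    ext i j
    rw [mul_apply]
    by_cases h : (i:ℕ) + k < m
    · rw [Fintype.sum_eq_single (⟨(i:ℕ)+k, h⟩ : Fin m) (fun q hq => by
        rw [of_apply, if_neg (fun hc => hq (Fin.ext (by simpa using hc.symm))), zero_mul])]
      simp only [Jb, of_apply, Fin.val_mk, if_pos rfl, one_mul, if_true, ← add_assoc]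
    · rw [Finset.sum_eq_zero (fun q _ => by
        rw [of_apply, if_neg (fun hc => h (by have := q.2; omega)), zero_mul])]
      rw [of_apply, if_neg (by have := j.2; omega)]

lemma Jb_pow_self (m : ℕ) : (Jb F m)^m = 0 := by
  rw [Jb_pow]
  ext i j
  rw [of_apply, if_neg (by have := j.2; have := i.2; omega)]
  rfl

lemma Jb_rank (m : ℕ) : (Jb F m).rank = m - 1 := by
  classical
  match m with
  | 0 =>
    have : Jb F 0 = 0 := Subsingleton.elim _ _
    rw [this, rank_zero]
  | m + 1 =>
    have hsub : (Jb F (m+1)).submatrix (Equiv.refl _) (finRotate (m+1)) =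
        diagonal (fun k : Fin (m+1) => if (k:ℕ) < m then (1:F) else 0) := by
      ext i k
      simp only [submatrix_apply, Equiv.refl_apply, finRotate_succ_apply, Jb, of_apply,
        diagonal_apply, Fin.val_add_one]
      by_cases hk : k = Fin.last m
      · have hkv : (k:ℕ) = m := by rw [hk]; rfl
        rw [if_pos hk]
        rw [if_neg (by omega)]
        split_ifs with h1 h2 <;> first | rfl | omega
      · have hkv : (k:ℕ) < m := by
          have := k.2
          have : (k:ℕ) ≠ m := fun hc => hk (Fin.ext (by simpa using hc))
          omega
        rw [if_neg hk]
        have := i.2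
        simp only [Fin.ext_iff]
        split_ifs <;> first | rfl | omega
    have h1 : (Jb F (m+1)).rank = (diagonal (fun k : Fin (m+1) =>
        if (k:ℕ) < m then (1:F) else 0)).rank := by
      rw [← hsub, rank_submatrix]
    rw [h1, rank_diagonal]
    have he : {k : Fin (m+1) // (if (k:ℕ) < m then (1:F) else 0) ≠ 0} ≃ Fin m :=
      ⟨fun x => ⟨(x.1 : ℕ), by
          have := x.2
          by_contra hc
          rw [if_neg (by omega)] at this
          exact this rfl⟩,
       fun y => ⟨⟨(y:ℕ), by have := y.2; omega⟩, by
          rw [if_pos (by simpa using y.2)]; exact one_ne_zero⟩,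
       fun x => by apply Subtype.ext; apply Fin.ext; rfl,
       fun y => rfl⟩
    rw [Fintype.card_congr he, Fintype.card_fin]
    omega

lemma Smat_det_isUnit (n : ℕ) : IsUnit (Smat F n).det :=
  Matrix.isUnit_det_of_right_inverse (S_mul_transpose F n)

lemma Mexp_eq_conj (n : ℕ) : Mexp F n = Smat F n * Jb F (n+n) * (Smat F n)⁻¹ := by
  have hdet := Smat_det_isUnit F n
  have : Mexp F n * (Smat F n * (Smat F n)⁻¹) = Smat F n * Jb F (n+n) * (Smat F n)⁻¹ := by
    rw [← mul_assoc, MS_eq_SJ]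
  rwa [mul_nonsing_inv _ hdet, mul_one] at this

lemma Mexp_pow (n : ℕ) (k : ℕ) :
    (Mexp F n)^k = Smat F n * (Jb F (n+n))^k * (Smat F n)⁻¹ := by
  have hdet := Smat_det_isUnit F n
  induction k with
  | zero => rw [pow_zero, pow_zero, mul_one, mul_nonsing_inv _ hdet]
  | succ k ih =>
    rw [pow_succ, ih, Mexp_eq_conj F n, pow_succ]
    rw [show Smat F n * (Jb F (n+n))^k * (Smat F n)⁻¹ *
        (Smat F n * Jb F (n+n) * (Smat F n)⁻¹)
      = Smat F n * (Jb F (n+n))^k * ((Smat F n)⁻¹ * Smat F n) *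
        Jb F (n+n) * (Smat F n)⁻¹ by simp only [mul_assoc]]
    rw [nonsing_inv_mul _ hdet, mul_one]
    simp only [mul_assoc]

lemma conj_Mexp (n : ℕ) :
    (Smat F n)⁻¹ * Mexp F n * Smat F n = Jb F (n+n) := by
  have hdet := Smat_det_isUnit F n
  rw [Mexp_eq_conj F n]
  rw [show (Smat F n)⁻¹ * (Smat F n * Jb F (n+n) * (Smat F n)⁻¹) * Smat F n
    = ((Smat F n)⁻¹ * Smat F n) * (Jb F (n+n) * ((Smat F n)⁻¹ * Smat F n)) by
      simp only [mul_assoc]]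
  rw [nonsing_inv_mul _ hdet, one_mul, mul_one]

end Aux14

/-- `-Ω_n P_n` is nilpotent of rank `2n - 1`, hence similar to the single
Jordan block `J_{2n}(0)`. -/
theorem stmt14 {F : Type*} [Field F] (h2 : (2 : F) ≠ 0) (n : ℕ) :
    let N := -(Omega F n * Pmat F n)
    IsNilpotent N ∧ N.rank = 2 * n - 1 ∧
      ∃ S : Matrix (Fin (n + n)) (Fin (n + n)) F, IsUnit S.det ∧
        S⁻¹ * (Matrix.reindex finSumFinEquiv finSumFinEquiv N) * S =
          Matrix.of (fun i j : Fin (n + n) => if (i : ℕ) + 1 = (j : ℕ) then 1 else 0) := by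
  intro N
  have hre : Matrix.reindex finSumFinEquiv finSumFinEquiv N = Aux14.Mexp F n :=
    Aux14.reindex_N F n
  have hdet := Aux14.Smat_det_isUnit F n
  refine ⟨⟨n+n, ?_⟩, ?_, Aux14.Smat F n, hdet, ?_⟩
  · -- nilpotency
    have hM : (Aux14.Mexp F n)^(n+n) = 0 := by
      rw [Aux14.Mexp_pow, Aux14.Jb_pow_self, mul_zero, zero_mul]
    have := (Matrix.reindexAlgEquiv F F finSumFinEquiv).injective
      (a₁ := N^(n+n)) (a₂ := 0)
    apply this
    rw [map_pow, map_zero, Matrix.reindexAlgEquiv_apply, hre, hM]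
  · -- rank
    have h1 : N.rank = (Matrix.reindex finSumFinEquiv finSumFinEquiv N).rank :=
      (Matrix.rank_reindex _ _ _).symm
    rw [h1, hre, Aux14.Mexp_eq_conj F n]
    have hdet' : IsUnit ((Aux14.Smat F n)⁻¹).det :=
      Matrix.isUnit_det_of_right_inverse (Matrix.nonsing_inv_mul _ hdet)
    rw [mul_assoc, Matrix.rank_mul_eq_right_of_isUnit_det _ _ hdet,
      Matrix.rank_mul_eq_left_of_isUnit_det _ _ hdet', Aux14.Jb_rank]
    omega
  · rw [hre]
    exact Aux14.conj_Mexp F n
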